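/- Let L be a unimodular lattice and M, N mutually orthogonal primitive sublattices with N = M^⊥ and M = N^⊥. Given automorphisms σ_M of M and σ_N of N that induce the same automorphism on A_M ≅ A_N (under the natural gluing isomorphism), there exists an automorphism of L restricting to σ_M on M and σ_N on N. -/

import Mathlib

/-- The dual lattice of a `ℤ`-lattice `M` in a rational quadratic space `(V, B)`:
elements of the `ℚ`-span of `M` pairing integrally with `M`, as an additive subgroup. -/
def dualSub {V : Type*} [AddCommGroup V] [Module ℚ V]
    (B : V →ₗ[ℚ] V →ₗ[ℚ] ℚ) (M : Submodule ℤ V) : AddSubgroup V where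
  carrier := {x | x ∈ Submodule.span ℚ (M : Set V) ∧ ∀ m ∈ M, ∃ n : ℤ, B x m = (n : ℚ)}
  zero_mem' := ⟨zero_mem _, fun m _ => ⟨0, by simp⟩⟩
  add_mem' := by
    rintro x y ⟨hx1, hx2⟩ ⟨hy1, hy2⟩
    refine ⟨add_mem hx1 hy1, fun m hm => ?_⟩
    obtain ⟨a, ha⟩ := hx2 m hm
    obtain ⟨b, hb⟩ := hy2 m hm
    exact ⟨a + b, by rw [map_add, LinearMap.add_apply, ha, hb]; push_cast; ring⟩
  neg_mem' := by
    rintro x ⟨hx1, hx2⟩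
    refine ⟨neg_mem hx1, fun m hm => ?_⟩
    obtain ⟨a, ha⟩ := hx2 m hm
    exact ⟨-a, by rw [map_neg, LinearMap.neg_apply, ha]; push_cast; ring⟩

/-- Nikulin's gluing of automorphisms: let `L` be a unimodular lattice and `M, N` mutually
orthogonal primitive sublattices with `N = M^⊥`, `M = N^⊥`. Given isometries `σM` of `M`
and `σN` of `N` inducing the same automorphism on `A_M ≅ A_N` under the gluing isomorphism
(i.e. `x + y ∈ L → σM x + σN y ∈ L` for `x ∈ M*`, `y ∈ N*`), there is an automorphism of
`L` restricting to `σM` on `M` and to `σN` on `N`. -/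
theorem stmt_12 {V : Type*} [AddCommGroup V] [Module ℚ V]
    (B : V →ₗ[ℚ] V →ₗ[ℚ] ℚ) (hsymm : ∀ v w, B v w = B w v)
    (hnd : ∀ v : V, (∀ w, B v w = 0) → v = 0)
    (L M N : Submodule ℤ V)
    (hspan : Submodule.span ℚ (L : Set V) = ⊤)
    (hLint : ∀ x ∈ L, ∀ y ∈ L, ∃ n : ℤ, B x y = (n : ℚ))
    (hLuni : ∀ x : V, (∀ m ∈ L, ∃ n : ℤ, B x m = (n : ℚ)) → x ∈ L)
    (hML : M ≤ L) (hNL : N ≤ L)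
    (horth : ∀ m ∈ M, ∀ n ∈ N, B m n = 0)
    (hMperp : ∀ x ∈ L, (∀ n ∈ N, B x n = 0) → x ∈ M)
    (hNperp : ∀ x ∈ L, (∀ m ∈ M, B x m = 0) → x ∈ N)
    (hcompl : IsCompl (Submodule.span ℚ (M : Set V)) (Submodule.span ℚ (N : Set V)))
    (σM σN : V ≃ₗ[ℚ] V)
    (hσM : Submodule.map ((σM : V →ₗ[ℚ] V).restrictScalars ℤ) M = M)
    (hσN : Submodule.map ((σN : V →ₗ[ℚ] V).restrictScalars ℤ) N = N)
    (hσMiso : ∀ m ∈ M, ∀ m' ∈ M, B (σM m) (σM m') = B m m')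
    (hσNiso : ∀ n ∈ N, ∀ n' ∈ N, B (σN n) (σN n') = B n n')
    (hglue : ∀ x ∈ dualSub B M, ∀ y ∈ dualSub B N, x + y ∈ L → σM x + σN y ∈ L) :
    ∃ F : V ≃ₗ[ℚ] V,
      Submodule.map ((F : V →ₗ[ℚ] V).restrictScalars ℤ) L = L ∧
      (∀ z ∈ L, ∀ w ∈ L, B (F z) (F w) = B z w) ∧
      (∀ m ∈ M, F m = σM m) ∧ (∀ n ∈ N, F n = σN n) := by
  classical
  set p := Submodule.span ℚ (M : Set V) with hp
  set q := Submodule.span ℚ (N : Set V) with hq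
  -- projections onto p and q
  set πM : V →ₗ[ℚ] V := p.subtype ∘ₗ p.linearProjOfIsCompl q hcompl with hπMdef
  set πN : V →ₗ[ℚ] V := q.subtype ∘ₗ q.linearProjOfIsCompl p hcompl.symm with hπNdef
  have hπM_mem : ∀ v, πM v ∈ p := fun v => (p.linearProjOfIsCompl q hcompl v).2
  have hπN_mem : ∀ v, πN v ∈ q := fun v => (q.linearProjOfIsCompl p hcompl.symm v).2
  have hsum : ∀ v, πM v + πN v = v := fun v =>
    Submodule.projection_add_projection_eq_self hcompl v
  have hπM_left : ∀ v ∈ p, πM v = v := by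
    intro v hv
    have := Submodule.projectionOnto_apply_left hcompl ⟨v, hv⟩
    exact congrArg Subtype.val this
  have hπM_right : ∀ v ∈ q, πM v = 0 := by
    intro v hv
    have := Submodule.projectionOnto_apply_of_mem_right hcompl hv
    exact congrArg Subtype.val this
  have hπN_left : ∀ v ∈ q, πN v = v := by
    intro v hv
    have := Submodule.projectionOnto_apply_left hcompl.symm ⟨v, hv⟩
    exact congrArg Subtype.val this
  have hπN_right : ∀ v ∈ p, πN v = 0 := by
    intro v hv
    have := Submodule.projectionOnto_apply_of_mem_right hcompl.symm hv
    exact congrArg Subtype.val this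
  -- σM, σN preserve the spans
  have hMset : σM '' (M : Set V) = (M : Set V) := by
    have := congrArg (fun S : Submodule ℤ V => (S : Set V)) hσM
    simpa [Submodule.map_coe] using this
  have hNset : σN '' (N : Set V) = (N : Set V) := by
    have := congrArg (fun S : Submodule ℤ V => (S : Set V)) hσN
    simpa [Submodule.map_coe] using this
  have hσMp : Submodule.map (σM : V →ₗ[ℚ] V) p = p := by
    rw [hp, Submodule.map_span]
    exact congrArg _ hMset
  have hσNq : Submodule.map (σN : V →ₗ[ℚ] V) q = q := by
    rw [hq, Submodule.map_span]
    exact congrArg _ hNset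
  have hσMp' : ∀ a ∈ p, σM a ∈ p := by
    intro a ha
    rw [← hσMp]; exact ⟨a, ha, rfl⟩
  have hσNq' : ∀ b ∈ q, σN b ∈ q := by
    intro b hb
    rw [← hσNq]; exact ⟨b, hb, rfl⟩
  have hσMp_inv : ∀ a ∈ p, σM.symm a ∈ p := by
    intro a ha
    rw [← hσMp] at ha
    obtain ⟨b, hb, rfl⟩ := ha
    simpa using hb
  have hσNq_inv : ∀ b ∈ q, σN.symm b ∈ q := by
    intro b hb
    rw [← hσNq] at hb
    obtain ⟨c, hc, rfl⟩ := hb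
    simpa using hc
  -- orthogonality of spans
  have h1 : ∀ m ∈ M, ∀ b ∈ q, B m b = 0 := by
    intro m hm b hb
    induction hb using Submodule.span_induction with
    | mem n hn => exact horth m hm n hn
    | zero => simp
    | add x y _ _ hx hy => simp [hx, hy]
    | smul r x _ hx => simp [hx]
  have hporth : ∀ a ∈ p, ∀ b ∈ q, B a b = 0 := by
    intro a ha
    induction ha using Submodule.span_induction with
    | mem m hm => exact h1 m hm
    | zero => simp
    | add x y _ _ hx hy => intro b hb; simp [hx b hb, hy b hb]
    | smul r x _ hx => intro b hb; simp [hx b hb]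
  -- isometry on spans
  have hpiso : ∀ a ∈ p, ∀ c ∈ p, B (σM a) (σM c) = B a c := by
    intro a ha c hc
    refine Submodule.span_induction₂ (p := fun a c _ _ => B (σM a) (σM c) = B a c)
      ?_ ?_ ?_ ?_ ?_ ?_ ?_ ha hc
    · intro x y hx hy; exact hσMiso x hx y hy
    · intro y _; simp
    · intro x _; simp
    · intro x y z _ _ _ h1 h2; simp [h1, h2]
    · intro x y z _ _ _ h1 h2; simp [h1, h2]
    · intro r x y _ _ h; simp [h]
    · intro r x y _ _ h; simp [h]
  have hqiso : ∀ a ∈ q, ∀ c ∈ q, B (σN a) (σN c) = B a c := by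
    intro a ha c hc
    refine Submodule.span_induction₂ (p := fun a c _ _ => B (σN a) (σN c) = B a c)
      ?_ ?_ ?_ ?_ ?_ ?_ ?_ ha hc
    · intro x y hx hy; exact hσNiso x hx y hy
    · intro y _; simp
    · intro x _; simp
    · intro x y z _ _ _ h1 h2; simp [h1, h2]
    · intro x y z _ _ _ h1 h2; simp [h1, h2]
    · intro r x y _ _ h; simp [h]
    · intro r x y _ _ h; simp [h]
  -- define f and its inverse g
  set f : V →ₗ[ℚ] V := (σM : V →ₗ[ℚ] V) ∘ₗ πM + (σN : V →ₗ[ℚ] V) ∘ₗ πN with hfdef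
  set g : V →ₗ[ℚ] V := (σM.symm : V →ₗ[ℚ] V) ∘ₗ πM + (σN.symm : V →ₗ[ℚ] V) ∘ₗ πN with hgdef
  have hfv : ∀ v, f v = σM (πM v) + σN (πN v) := fun v => rfl
  have hgv : ∀ v, g v = σM.symm (πM v) + σN.symm (πN v) := fun v => rfl
  have hπM_split : ∀ a ∈ p, ∀ b ∈ q, πM (a + b) = a := by
    intro a ha b hb
    rw [map_add, hπM_left a ha, hπM_right b hb, add_zero]
  have hπN_split : ∀ a ∈ p, ∀ b ∈ q, πN (a + b) = b := by
    intro a ha b hb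
    rw [map_add, hπN_right a ha, hπN_left b hb, zero_add]
  have hfg : ∀ v, f (g v) = v := by
    intro v
    rw [hgv, hfv]
    rw [hπM_split _ (hσMp_inv _ (hπM_mem v)) _ (hσNq_inv _ (hπN_mem v)),
        hπN_split _ (hσMp_inv _ (hπM_mem v)) _ (hσNq_inv _ (hπN_mem v))]
    simp [hsum v]
  have hgf : ∀ v, g (f v) = v := by
    intro v
    rw [hfv, hgv]
    rw [hπM_split _ (hσMp' _ (hπM_mem v)) _ (hσNq' _ (hπN_mem v)),
        hπN_split _ (hσMp' _ (hπM_mem v)) _ (hσNq' _ (hπN_mem v))]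
    simp [hsum v]
  set F : V ≃ₗ[ℚ] V := LinearEquiv.ofLinear f g
    (LinearMap.ext hfg) (LinearMap.ext hgf) with hFdef
  have hFv : ∀ v, F v = f v := fun v => rfl
  -- F is a global isometry
  have hFiso : ∀ v w, B (F v) (F w) = B v w := by
    intro v w
    rw [hFv, hFv, hfv, hfv]
    conv_rhs => rw [← hsum v, ← hsum w]
    simp only [map_add, LinearMap.add_apply]
    rw [hporth _ (hσMp' _ (hπM_mem v)) _ (hσNq' _ (hπN_mem w)),
        hsymm (σN (πN v)) (σM (πM w)),
        hporth _ (hσMp' _ (hπM_mem w)) _ (hσNq' _ (hπN_mem v)),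
        hpiso _ (hπM_mem v) _ (hπM_mem w), hqiso _ (hπN_mem v) _ (hπN_mem w),
        hporth _ (hπM_mem v) _ (hπN_mem w),
        hsymm (πN v) (πM w), hporth _ (hπM_mem w) _ (hπN_mem v)]
  -- F maps L into L
  have hFL : ∀ z ∈ L, f z ∈ L := by
    intro z hz
    have hxd : πM z ∈ dualSub B M := by
      refine ⟨hπM_mem z, fun m hm => ?_⟩
      have h0 : B (πN z) m = 0 := by
        rw [hsymm]
        exact hporth _ (Submodule.subset_span hm) _ (hπN_mem z)
      obtain ⟨n, hn⟩ := hLint z hz m (hML hm)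
      refine ⟨n, ?_⟩
      have : B (πM z + πN z) m = B z m := by rw [hsum]
      rw [map_add, LinearMap.add_apply, h0, add_zero] at this
      rw [this, hn]
    have hyd : πN z ∈ dualSub B N := by
      refine ⟨hπN_mem z, fun n hn => ?_⟩
      have h0 : B (πM z) n = 0 := hporth _ (hπM_mem z) _ (Submodule.subset_span hn)
      obtain ⟨k, hk⟩ := hLint z hz n (hNL hn)
      refine ⟨k, ?_⟩
      have : B (πM z + πN z) n = B z n := by rw [hsum]
      rw [map_add, LinearMap.add_apply, h0, zero_add] at this
      rw [this, hk]
    have := hglue _ hxd _ hyd (by rw [hsum]; exact hz)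
    rw [hfv]
    exact this
  -- g maps L into L
  have hgL : ∀ z ∈ L, g z ∈ L := by
    intro z hz
    apply hLuni
    intro m hm
    have h1 : B (g z) m = B z (f m) := by
      have h2 := hFiso (g z) m
      rw [hFv, hFv, hfg] at h2
      rw [← h2]
    rw [h1]
    exact hLint z hz (f m) (hFL m hm)
  refine ⟨F, ?_, fun z _ w _ => hFiso z w, ?_, ?_⟩
  · apply le_antisymm
    · rintro x ⟨z, hz, rfl⟩
      exact hFL z hz
    · intro x hx
      exact ⟨g x, hgL x hx, hfg x⟩
  · intro m hm
    rw [hFv, hfv, hπM_left m (Submodule.subset_span hm),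
      hπN_right m (Submodule.subset_span hm)]
    simp
  · intro n hn
    rw [hFv, hfv, hπN_left n (Submodule.subset_span hn),
      hπM_right n (Submodule.subset_span hn)]
    simp
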